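/- Let r ≥ 2 be an integer and define ε_r : ℝ → ℝ by ε_r(α) = sin²α · cos^{2(r−1)}α. For every real number R with 0 < R < 1, there exists α ∈ (0, π) with sin α = R, cos α ≠ 0 and the derivative of ε_r vanishing at α, if and only if R = 1/√r. -/

import Mathlib

open Real

lemma aux_deriv (k : ℕ) (α : ℝ) :
    deriv (fun α : ℝ => sin α ^ 2 * cos α ^ (2 * k + 2)) α =
      2 * sin α * cos α * cos α ^ (2 * k + 2) +
        sin α ^ 2 * ((2 * k + 2) * cos α ^ (2 * k + 1) * (-sin α)) := by
  have h1 : HasDerivAt (fun α : ℝ => sin α ^ 2) (2 * sin α * cos α) α := by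
    have := (hasDerivAt_sin α).fun_pow 2
    simpa [mul_comm, mul_assoc, mul_left_comm] using this
  have h2 : HasDerivAt (fun α : ℝ => cos α ^ (2 * k + 2))
      ((2 * k + 2) * cos α ^ (2 * k + 1) * (-sin α)) α := by
    have := (hasDerivAt_cos α).fun_pow (2 * k + 2)
    simpa using this
  exact (h1.mul h2).deriv

theorem stmt_4 (r : ℕ) (hr : 2 ≤ r)
    (ε : ℝ → ℝ) (hε : ∀ α, ε α = sin α ^ 2 * cos α ^ (2 * (r - 1)))
    (R : ℝ) (hR : 0 < R ∧ R < 1) :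
    (∃ α ∈ Set.Ioo 0 π, sin α = R ∧ cos α ≠ 0 ∧ deriv ε α = 0) ↔
      R = 1 / Real.sqrt r := by
  obtain ⟨hR0, hR1⟩ := hR
  obtain ⟨k, rfl⟩ : ∃ k, r = k + 2 := ⟨r - 2, by omega⟩
  have hεeq : ε = fun α : ℝ => sin α ^ 2 * cos α ^ (2 * k + 2) := by
    have h : 2 * (k + 2 - 1) = 2 * k + 2 := by omega
    funext α; rw [hε α, h]
  have hrpos : (0 : ℝ) < (k + 2 : ℕ) := by positivity
  have hderiv : ∀ α : ℝ, deriv ε α =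
      2 * sin α * cos α * cos α ^ (2 * k + 2) +
        sin α ^ 2 * ((2 * k + 2) * cos α ^ (2 * k + 1) * (-sin α)) := by
    intro α; rw [hεeq]; exact aux_deriv k α
  constructor
  · rintro ⟨α, hα, hsin, hcos, hd⟩
    rw [hderiv α] at hd
    have hfac : sin α * cos α ^ (2 * k + 1) *
        (2 * cos α ^ 2 - (2 * k + 2) * sin α ^ 2) = 0 := by
      rw [← hd]; ring
    have hs : sin α ≠ 0 := by rw [hsin]; exact ne_of_gt hR0
    have hc : cos α ^ (2 * k + 1) ≠ 0 := pow_ne_zero _ hcos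
    have hmain : 2 * cos α ^ 2 - (2 * k + 2) * sin α ^ 2 = 0 := by
      rcases mul_eq_zero.mp hfac with h | h
      · rcases mul_eq_zero.mp h with h | h
        · exact absurd h hs
        · exact absurd h hc
      · exact h
    have hpy : cos α ^ 2 = 1 - sin α ^ 2 := by
      have := sin_sq_add_cos_sq α; linarith
    rw [hpy, hsin] at hmain
    have hR2 : R ^ 2 = 1 / (k + 2 : ℝ) := by
      have h2 : ((k : ℝ) + 2) * R ^ 2 = 1 := by nlinarith
      field_simp at h2 ⊢; linarith
    have : R = Real.sqrt (R ^ 2) := (Real.sqrt_sq hR0.le).symm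
    rw [this, hR2]
    rw [one_div, one_div, Real.sqrt_inv]
    push_cast
    ring_nf
  · intro hReq
    have hsq : Real.sqrt ((k : ℝ) + 2) > 0 := Real.sqrt_pos.mpr (by positivity)
    have hR2 : R ^ 2 = 1 / ((k : ℝ) + 2) := by
      rw [hReq]
      rw [div_pow, one_pow, Real.sq_sqrt (by positivity : (0:ℝ) ≤ ((k:ℕ)+2:ℕ))]
      push_cast; ring
    have hRle : R ≤ 1 := hR1.le
    refine ⟨Real.arcsin R, ⟨Real.arcsin_pos.mpr hR0, lt_of_lt_of_le (Real.arcsin_lt_pi_div_two.mpr hR1) (by linarith [Real.pi_pos])⟩, Real.sin_arcsin (by linarith) hRle, ?_, ?_⟩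
    · have hcpos : 0 < cos (Real.arcsin R) := by
        apply Real.cos_pos_of_mem_Ioo
        constructor
        · linarith [Real.neg_pi_div_two_le_arcsin R, Real.arcsin_pos.mpr hR0, Real.pi_pos]
        · exact Real.arcsin_lt_pi_div_two.mpr hR1
      exact ne_of_gt hcpos
    · rw [hderiv]
      have hsin' : sin (Real.arcsin R) = R := Real.sin_arcsin (by linarith) hRle
      have hcos2 : cos (Real.arcsin R) ^ 2 = 1 - R ^ 2 := by
        have := sin_sq_add_cos_sq (Real.arcsin R); rw [hsin'] at this; linarith
      have hodd : cos (Real.arcsin R) ^ (2 * k + 2) =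
          cos (Real.arcsin R) ^ (2 * k + 1) * cos (Real.arcsin R) := by ring
      rw [hsin', hodd]
      have key : 2 * R * cos (Real.arcsin R) ^ 2 =
          R ^ 2 * ((2 * k + 2) * R) := by
        rw [hcos2, hR2]
        have : ((k : ℝ) + 2) ≠ 0 := by positivity
        field_simp
        ring
      linear_combination cos (Real.arcsin R) ^ (2 * k + 1) * key
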